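/- arXiv:1405.1484 — 2 statements merged into one kernel-verified Lean document; each statement's English description precedes it below -/
import Mathlib

section
/- Let n ≥ 3 be a prime and let G be the graph of Construction 1. For each k, l ∈ [n], the set P_k^l is an independent set of the square G² of G; that is, any two distinct vertices of P_k^l are at distance greater than 2 in G. -/
open SimpleGraph

/-- Entry of the Latin square `L_i`:  `L_i(j,k) ≡ j + i·(k-1) (mod n)`, with
indices and entries taken in `ZMod n` (identifying `[n] = {1,…,n}` with `ZMod n`). -/
def latinL (n : ℕ) (i j k : ZMod n) : ZMod n := j + i * (k - 1)

/-- The vertices of the graph `G` of Construction 1: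
`pv k m l` is `v_{k,m}^l ∈ P`, `qv i j` is `w_{i,j} ∈ Q` (with `i ≠ 0`, i.e. `i ∈ [n-1]`),
`rv i j` is `u_{i,j} ∈ R`, and `sv m` is `s_m ∈ S`. -/
inductive Vert (n : ℕ) : Type
  | pv (k m l : ZMod n) : Vert n
  | qv (i : {x : ZMod n // x ≠ 0}) (j : ZMod n) : Vert n
  | rv (i : {x : ZMod n // x ≠ 0}) (j : ZMod n) : Vert n
  | sv (m : ZMod n) : Vert n

/-- One-directional description of the edges of Construction 1:
`w_{i,j}` is adjacent to `v_{k, L_i(j,k)}^l` for all `k, l`;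
`u_{i,j}` is adjacent to every vertex of `T_{l, L_i(j,l)}` for every `l`;
`s_m` is adjacent to every vertex of `T_{l,m}` for every `l`. -/
def rel {n : ℕ} : Vert n → Vert n → Prop
  | .qv i j, .pv k m _ => m = latinL n i.1 j k
  | .rv i j, .pv _ m l => m = latinL n i.1 j l
  | .sv m', .pv _ m _ => m = m'
  | _, _ => False

/-- The bipartite graph `G` of Construction 1. -/
def GraphG (n : ℕ) : SimpleGraph (Vert n) where
  Adj x y := rel x y ∨ rel y x
  symm := ⟨fun _ _ h => h.symm⟩
  loopless := ⟨by intro x h; cases x <;> simp [rel] at h⟩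

/-- The square `G²` of a graph `G`: two distinct vertices are adjacent iff
their distance in `G` is at most 2 (i.e. they are adjacent or have a common neighbor). -/
def square {V : Type*} (G : SimpleGraph V) : SimpleGraph V where
  Adj x y := x ≠ y ∧ (G.Adj x y ∨ ∃ z, G.Adj x z ∧ G.Adj z y)
  symm := by
    constructor
    rintro x y ⟨hxy, h | ⟨z, h1, h2⟩⟩
    · exact ⟨hxy.symm, Or.inl h.symm⟩
    · exact ⟨hxy.symm, Or.inr ⟨z, h2.symm, h1.symm⟩⟩
  loopless := ⟨fun x h => h.1 rfl⟩

/-- `P_k^l = {v_{k,1}^l, …, v_{k,n}^l}`. -/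
def Pkl (n : ℕ) (k l : ZMod n) : Set (Vert n) := {x | ∃ m, x = Vert.pv k m l}

/-- `P^l = P_1^l ∪ ⋯ ∪ P_n^l`. -/
def PlSet (n : ℕ) (l : ZMod n) : Set (Vert n) := {x | ∃ k m, x = Vert.pv k m l}

/-- `P = P^1 ∪ ⋯ ∪ P^n`. -/
def Pset (n : ℕ) : Set (Vert n) := {x | ∃ k m l, x = Vert.pv k m l}

/-- `T_{l,m} = {v_{1,m}^l, …, v_{n,m}^l}`. -/
def Tlm (n : ℕ) (l m : ZMod n) : Set (Vert n) := {x | ∃ k, x = Vert.pv k m l}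

/-- `Q_i = {w_{i,1}, …, w_{i,n}}`. -/
def QiSet (n : ℕ) (i : {x : ZMod n // x ≠ 0}) : Set (Vert n) := {x | ∃ j, x = Vert.qv i j}

/-- `Q = Q_1 ∪ ⋯ ∪ Q_{n-1}`. -/
def Qset (n : ℕ) : Set (Vert n) := {x | ∃ i j, x = Vert.qv i j}

/-- `R_i = {u_{i,1}, …, u_{i,n}}`. -/
def RiSet (n : ℕ) (i : {x : ZMod n // x ≠ 0}) : Set (Vert n) := {x | ∃ j, x = Vert.rv i j}

/-- `R = R_1 ∪ ⋯ ∪ R_{n-1}`. -/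
def Rset (n : ℕ) : Set (Vert n) := {x | ∃ i j, x = Vert.rv i j}

/-- `S = {s_1, …, s_n}`. -/
def Sset (n : ℕ) : Set (Vert n) := {x | ∃ m, x = Vert.sv m}

/-- `G_l`, the subgraph of `G` induced by `P^l ∪ Q` (kept on the same vertex type:
all edges of `G` with both endpoints in `P^l ∪ Q`). -/
def Gl (n : ℕ) (l : ZMod n) : SimpleGraph (Vert n) where
  Adj x y := (GraphG n).Adj x y ∧ x ∈ PlSet n l ∪ Qset n ∧ y ∈ PlSet n l ∪ Qset n
  symm := ⟨fun _ _ ⟨h, hx, hy⟩ => ⟨h.symm, hy, hx⟩⟩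
  loopless := ⟨fun x h => (GraphG n).loopless.irrefl x h.1⟩

/-- `G` is `k`-choosable: for every list assignment with all lists of size at least `k`
there is a proper coloring choosing each color from the corresponding list. -/
def Choosable {V : Type*} (G : SimpleGraph V) (k : ℕ) : Prop :=
  ∀ L : V → Finset ℕ, (∀ v, k ≤ (L v).card) →
    ∃ φ : V → ℕ, (∀ v, φ v ∈ L v) ∧ ∀ ⦃v w⦄, G.Adj v w → φ v ≠ φ w

/-- The list chromatic number `χ_ℓ(G)`: the least `k` such that `G` is `k`-choosable. -/
noncomputable def listChromaticNumber {V : Type*} (G : SimpleGraph V) : ℕ :=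
  sInf {k | Choosable G k}


/-- each `P_k^l` is an independent set of `G²`: any two distinct vertices
of `P_k^l` are non-adjacent in `G²` (i.e. at distance greater than 2 in `G`). -/
theorem stmt_6 (n : ℕ) (hn : n.Prime) (hn3 : 3 ≤ n) (k l : ZMod n) :
    ∀ x ∈ Pkl n k l, ∀ y ∈ Pkl n k l, x ≠ y → ¬ (square (GraphG n)).Adj x y := by
  rintro x ⟨m, rfl⟩ y ⟨m', rfl⟩ hxy ⟨_, hadj⟩
  rcases hadj with h | ⟨z, h1, h2⟩
  · rcases h with h | h <;> exact h
  · cases z with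
    | pv a b c => rcases h1 with h | h <;> exact h
    | qv i j =>
        rcases h1 with h | h; · exact h
        rcases h2 with h' | h'; swap; · exact h'
        exact hxy (by simp only [rel] at h h'; rw [h, h'])
    | rv i j =>
        rcases h1 with h | h; · exact h
        rcases h2 with h' | h'; swap; · exact h'
        exact hxy (by simp only [rel] at h h'; rw [h, h'])
    | sv m'' =>
        rcases h1 with h | h; · exact h
        rcases h2 with h' | h'; swap; · exact h'
        exact hxy (by simp only [rel] at h h'; rw [h, h'])
end

section
/- Let n ≥ 3 be a prime and let G be the graph of Construction 1. For any distinct s, t ∈ [n] and any vertices v ∈ P^s and v' ∈ P^t, the vertices v and v' are adjacent in the square G²; in fact, v and v' have a common neighbor in G. -/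
open SimpleGraph

/-- for distinct `s, t ∈ [n]` and any `v ∈ P^s`, `v' ∈ P^t`, the vertices
`v` and `v'` are adjacent in `G²`; in fact they have a common neighbor in `G`. -/
theorem stmt_12 (n : ℕ) (hn : n.Prime) (hn3 : 3 ≤ n) (s t : ZMod n) (hst : s ≠ t)
    (v v' : Vert n) (hv : v ∈ PlSet n s) (hv' : v' ∈ PlSet n t) :
    (square (GraphG n)).Adj v v' ∧ ∃ z, (GraphG n).Adj v z ∧ (GraphG n).Adj v' z := by
  obtain ⟨k, m, rfl⟩ := hv
  obtain ⟨k', m', rfl⟩ := hv'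
  have hfact : Fact n.Prime := ⟨hn⟩
  have hne : Vert.pv k m s ≠ Vert.pv k' m' t := by
    intro h; injection h with h1 h2 h3; exact hst h3
  have hz : ∃ z, (GraphG n).Adj (Vert.pv k m s) z ∧ (GraphG n).Adj (Vert.pv k' m' t) z := by
    by_cases hmm : m = m'
    · refine ⟨Vert.sv m, Or.inr ?_, Or.inr ?_⟩
      · show m = m; rfl
      · show m' = m; exact hmm.symm
    · have hstz : s - t ≠ 0 := sub_ne_zero.mpr hst
      have hi0 : (m - m') * (s - t)⁻¹ ≠ 0 :=
        mul_ne_zero (sub_ne_zero.mpr hmm) (inv_ne_zero hstz)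
      refine ⟨Vert.rv ⟨(m - m') * (s - t)⁻¹, hi0⟩
        (m - (m - m') * (s - t)⁻¹ * (s - 1)), Or.inr ?_, Or.inr ?_⟩
      · show m = latinL n _ _ s
        simp [latinL]
      · show m' = latinL n _ _ t
        unfold latinL
        field_simp
        ring
  exact ⟨⟨hne, Or.inr (hz.imp fun z ⟨h1, h2⟩ => ⟨h1, h2.symm⟩)⟩, hz⟩
end
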